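/- In a finite discounted MDP, for any policy π and the α-optimal policy π*, the value gap satisfies V^{π*}(s) − V^{π}(s) = α·[ D_KL(π(·|s)‖π*(·|s)) + E_{a∼π(·|s)}[D̄(π‖π*; s,a)] ] for every state s, where V^π(s) = E_{a∼π}[Q^π(s,a)] + αH^π(s) and V^{π*}(s) = α log Σ_a exp(Q^{π*}(s,a)/α). -/

import Mathlib

open Finset

variable {S A : Type*}

/-- A policy: for each state, a probability distribution over actions. -/
def IsPolicy [Fintype A] (π : S → A → ℝ) : Prop :=
  (∀ s a, 0 ≤ π s a) ∧ ∀ s, ∑ a, π s a = 1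

/-- A transition kernel: for each state-action pair, a distribution over next states. -/
def IsKernel [Fintype S] (P : S → A → S → ℝ) : Prop :=
  (∀ s a s', 0 ≤ P s a s') ∧ ∀ s a, ∑ s', P s a s' = 1

/-- Shannon entropy of a finitely supported distribution. -/
noncomputable def entH [Fintype A] (p : A → ℝ) : ℝ := -∑ a, p a * Real.log (p a)

/-- Kullback–Leibler divergence on a finite set. -/
noncomputable def KLdiv [Fintype A] (p q : A → ℝ) : ℝ := ∑ a, p a * Real.log (p a / q a)

/-- Soft (log-sum-exp) value of a Q-function at a state. -/
noncomputable def softV [Fintype A] (α : ℝ) (Q : S → A → ℝ) (s : S) : ℝ :=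
  α * Real.log (∑ a, Real.exp (Q s a / α))

/-- Q satisfies the soft Bellman equation for policy π under reward r. -/
def IsSoftQ [Fintype S] [Fintype A] (P : S → A → S → ℝ) (r : S → A → ℝ) (γ α : ℝ)
    (π : S → A → ℝ) (Q : S → A → ℝ) : Prop :=
  ∀ s a, Q s a = r s a + γ * ∑ s', P s a s' *
    ((∑ a', π s' a' * Q s' a') + α * entH (π s'))

/-- π is the softmax (α-optimal) policy of the soft Q-function Q. -/
def IsAlphaOptimal [Fintype A] (α : ℝ) (π : S → A → ℝ) (Q : S → A → ℝ) : Prop :=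
  ∀ s a, π s a = Real.exp ((Q s a - softV α Q s) / α)

/-- `EKL P π πstar n s a` = expected KL divergence `D_KL(π(·|s_{n+1}) ‖ πstar(·|s_{n+1}))`
at time `n+1` along a π-trajectory started at `(s_0, a_0) = (s, a)`. -/
noncomputable def EKL [Fintype S] [Fintype A] (P : S → A → S → ℝ)
    (π πstar : S → A → ℝ) : ℕ → S → A → ℝ
  | 0 => fun s a => ∑ s', P s a s' * KLdiv (π s') (πstar s')
  | (n+1) => fun s a => ∑ s', P s a s' * ∑ a', π s' a' * EKL P π πstar n s' a'

/-- Sequential forward KL divergence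
`D̄(π‖πstar; s,a) = Σ_{t≥1} γ^t E[D_KL(π(·|s_t)‖πstar(·|s_t))]`. -/
noncomputable def seqKL [Fintype S] [Fintype A] (P : S → A → S → ℝ)
    (π πstar : S → A → ℝ) (γ : ℝ) (s : S) (a : A) : ℝ :=
  ∑' n : ℕ, γ ^ (n + 1) * EKL P π πstar n s a

/-- `stateDist P π n s a x` = probability of being at state `x` at time `n+1` along a
π-trajectory started at `(s_0, a_0) = (s, a)`. -/
noncomputable def stateDist [Fintype S] [Fintype A] (P : S → A → S → ℝ)
    (π : S → A → ℝ) : ℕ → S → A → S → ℝ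
  | 0 => fun s a x => P s a x
  | (n+1) => fun s a x => ∑ s', stateDist P π n s a s' * ∑ a', π s' a' * P s' a' x

lemma wavg_abs_le {ι : Type*} [Fintype ι] (w f : ι → ℝ) (K : ℝ)
    (hw : ∀ i, 0 ≤ w i) (hw1 : ∑ i, w i = 1) (hf : ∀ i, |f i| ≤ K) :
    |∑ i, w i * f i| ≤ K := by
  calc |∑ i, w i * f i| ≤ ∑ i, |w i * f i| := Finset.abs_sum_le_sum_abs _ _
    _ = ∑ i, w i * |f i| := by
        refine Finset.sum_congr rfl fun i _ => ?_
        rw [abs_mul, abs_of_nonneg (hw i)]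
    _ ≤ ∑ i, w i * K := Finset.sum_le_sum fun i _ => mul_le_mul_of_nonneg_left (hf i) (hw i)
    _ = K := by rw [← Finset.sum_mul, hw1, one_mul]

/-- Iterated π-averaged expectation of a state-action function. -/
noncomputable def iterAvg [Fintype S] [Fintype A] (P : S → A → S → ℝ) (π : S → A → ℝ)
    (f : S → A → ℝ) : ℕ → S → A → ℝ
  | 0 => fun s a => ∑ s', P s a s' * ∑ a', π s' a' * f s' a'
  | (n+1) => fun s a => ∑ s', P s a s' * ∑ a', π s' a' * iterAvg P π f n s' a'

theorem stmt19 [Fintype S] [Fintype A] [Nonempty A]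
    (P : S → A → S → ℝ) (hP : IsKernel P)
    (r : S → A → ℝ) (γ α : ℝ) (hγ0 : 0 ≤ γ) (hγ1 : γ < 1) (hα : 0 < α)
    (πstar π : S → A → ℝ) (hπstar : IsPolicy πstar) (hπ : IsPolicy π)
    (hsupp : ∀ s a, 0 < π s a → 0 < πstar s a)
    (Qstar : S → A → ℝ) (hQstar : IsSoftQ P r γ α πstar Qstar)
    (hopt : IsAlphaOptimal α πstar Qstar)
    (Qπ : S → A → ℝ) (hQπ : IsSoftQ P r γ α π Qπ) :
    ∀ s : S, softV α Qstar s - ((∑ a, π s a * Qπ s a) + α * entH (π s)) =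
      α * (KLdiv (π s) (πstar s) + ∑ a, π s a * seqKL P π πstar γ s a) := by
  intro s
  have hα' : (α:ℝ) ≠ 0 := ne_of_gt hα
  have hps : ∀ t a, (0:ℝ) < πstar t a := fun t a => by rw [hopt t a]; exact Real.exp_pos _
  have hlog : ∀ t a, Real.log (πstar t a) = (Qstar t a - softV α Qstar t) / α :=
    fun t a => by rw [hopt t a, Real.log_exp]
  -- optimal value identity
  have hB : ∀ t, (∑ a, πstar t a * Qstar t a) + α * entH (πstar t) = softV α Qstar t := by
    intro t
    have h1 : ∑ a, πstar t a * Real.log (πstar t a)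
        = ((∑ a, πstar t a * Qstar t a) - softV α Qstar t) / α := by
      have e : ∀ a : A, πstar t a * Real.log (πstar t a)
          = (πstar t a * Qstar t a - πstar t a * softV α Qstar t) / α := by
        intro a; rw [hlog t a]; ring
      rw [Finset.sum_congr rfl fun a _ => e a, ← Finset.sum_div,
        Finset.sum_sub_distrib, ← Finset.sum_mul, hπstar.2, one_mul]
    unfold entH
    rw [h1]; field_simp; ring
  -- KL identity for π against Qstar
  have hC : ∀ t, (∑ a, π t a * Qstar t a) + α * entH (π t)
      = softV α Qstar t - α * KLdiv (π t) (πstar t) := by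
    intro t
    have h1 : ∀ a : A, π t a * Real.log (π t a / πstar t a)
        = π t a * Real.log (π t a)
          - (π t a * Qstar t a - π t a * softV α Qstar t) / α := by
      intro a
      by_cases h : π t a = 0
      · simp [h]
      · rw [Real.log_div h (ne_of_gt (hps t a)), hlog t a]; ring
    have h2 : KLdiv (π t) (πstar t)
        = (∑ a, π t a * Real.log (π t a))
          - ((∑ a, π t a * Qstar t a) - softV α Qstar t) / α := by
      unfold KLdiv
      rw [Finset.sum_congr rfl fun a _ => h1 a, Finset.sum_sub_distrib, ← Finset.sum_div,
        Finset.sum_sub_distrib, ← Finset.sum_mul, hπ.2, one_mul]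
    unfold entH
    rw [h2]; field_simp; ring
  set D : S → A → ℝ := fun t a => Qstar t a - Qπ t a with hD
  set G : S → ℝ := fun t =>
    softV α Qstar t - ((∑ a, π t a * Qπ t a) + α * entH (π t)) with hG
  -- Bellman difference
  have hDrec : ∀ t a, D t a = γ * ∑ s', P t a s' * G s' := by
    intro t a
    have e1 : Qstar t a = r t a + γ * ∑ s', P t a s' * softV α Qstar s' := by
      rw [hQstar t a]
      congr 1
      congr 1
      exact Finset.sum_congr rfl fun s' _ => by rw [hB s']
    have e2 : (∑ s', P t a s' * softV α Qstar s')
        - ∑ s', P t a s' * ((∑ a', π s' a' * Qπ s' a') + α * entH (π s'))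
        = ∑ s', P t a s' * G s' := by
      rw [← Finset.sum_sub_distrib]
      exact Finset.sum_congr rfl fun s' _ => by rw [hG]; ring
    simp only [hD]
    rw [e1, hQπ t a]
    linear_combination γ * e2
  -- G in terms of KL and D
  have hGrec : ∀ t, G t = α * KLdiv (π t) (πstar t) + ∑ a, π t a * D t a := by
    intro t
    have h3 : ∑ a, π t a * D t a
        = (∑ a, π t a * Qstar t a) - ∑ a, π t a * Qπ t a := by
      rw [← Finset.sum_sub_distrib]
      exact Finset.sum_congr rfl fun a _ => by simp only [hD]; ring
    have h4 := hC t
    simp only [hG]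
    linarith
  -- double-average linearity helper
  have hlin : ∀ (f g : S → A → ℝ) (c : ℝ) (t : S) (a : A),
      (∑ s', P t a s' * ∑ a', π s' a' * (c * f s' a' + γ * g s' a'))
      = c * (∑ s', P t a s' * ∑ a', π s' a' * f s' a')
        + γ * (∑ s', P t a s' * ∑ a', π s' a' * g s' a') := by
    intro f g c t a
    have inner : ∀ s' : S, ∑ a', π s' a' * (c * f s' a' + γ * g s' a')
        = c * (∑ a', π s' a' * f s' a') + γ * ∑ a', π s' a' * g s' a' := by
      intro s'
      rw [Finset.mul_sum _ _ c, Finset.mul_sum _ _ γ, ← Finset.sum_add_distrib]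
      exact Finset.sum_congr rfl fun a' _ => by ring
    calc ∑ s', P t a s' * ∑ a', π s' a' * (c * f s' a' + γ * g s' a')
        = ∑ s', (c * (P t a s' * ∑ a', π s' a' * f s' a')
            + γ * (P t a s' * ∑ a', π s' a' * g s' a')) :=
          Finset.sum_congr rfl fun s' _ => by rw [inner s']; ring
      _ = _ := by
          rw [Finset.sum_add_distrib, ← Finset.mul_sum, ← Finset.mul_sum]
  have iter0 : ∀ (f : S → A → ℝ) (t : S) (a : A), iterAvg P π f 0 t a
      = ∑ s', P t a s' * ∑ a', π s' a' * f s' a' := fun f t a => by simp [iterAvg]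
  have iterS : ∀ (f : S → A → ℝ) (n : ℕ) (t : S) (a : A), iterAvg P π f (n+1) t a
      = ∑ s', P t a s' * ∑ a', π s' a' * iterAvg P π f n s' a' := fun f n t a => by
    simp [iterAvg]
  have EKL0 : ∀ (t : S) (a : A), EKL P π πstar 0 t a
      = ∑ s', P t a s' * KLdiv (π s') (πstar s') := fun t a => by simp [EKL]
  have EKLS : ∀ (n : ℕ) (t : S) (a : A), EKL P π πstar (n+1) t a
      = ∑ s', P t a s' * ∑ a', π s' a' * EKL P π πstar n s' a' := fun n t a => by
    simp [EKL]
  -- one-step split of D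
  have hDsplit : ∀ t a, D t a
      = α * γ * EKL P π πstar 0 t a + γ * iterAvg P π D 0 t a := by
    intro t a
    rw [hDrec t a]
    have e : ∀ s' : S, P t a s' * G s'
        = P t a s' * (α * KLdiv (π s') (πstar s'))
          + P t a s' * ∑ a', π s' a' * D s' a' := fun s' => by rw [hGrec s']; ring
    rw [Finset.sum_congr rfl fun s' _ => e s', Finset.sum_add_distrib]
    have e2 : ∑ s', P t a s' * (α * KLdiv (π s') (πstar s'))
        = α * ∑ s', P t a s' * KLdiv (π s') (πstar s') := by
      rw [Finset.mul_sum]; exact Finset.sum_congr rfl fun s' _ => by ring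
    rw [e2, EKL0 t a, iter0 D t a]
    ring
  -- remainder recursion
  have hRrec : ∀ n (t : S) (a : A), iterAvg P π D n t a
      = α * γ * EKL P π πstar (n+1) t a + γ * iterAvg P π D (n+1) t a := by
    intro n
    induction n with
    | zero =>
      intro t a
      have step : iterAvg P π D 0 t a
          = ∑ s', P t a s' * ∑ a', π s' a' *
              (α * γ * EKL P π πstar 0 s' a' + γ * iterAvg P π D 0 s' a') := by
        rw [iter0 D t a]
        refine Finset.sum_congr rfl fun s' _ => ?_
        congr 1
        exact Finset.sum_congr rfl fun a' _ => by rw [← hDsplit s' a']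
      rw [step, hlin (EKL P π πstar 0) (iterAvg P π D 0) (α * γ) t a,
        ← EKLS 0 t a, ← iterS D 0 t a]
    | succ n ih =>
      intro t a
      have step : iterAvg P π D (n+1) t a
          = ∑ s', P t a s' * ∑ a', π s' a' *
              (α * γ * EKL P π πstar (n+1) s' a' + γ * iterAvg P π D (n+1) s' a') := by
        rw [iterS D n t a]
        refine Finset.sum_congr rfl fun s' _ => ?_
        congr 1
        exact Finset.sum_congr rfl fun a' _ => by rw [← ih s' a']
      rw [step, hlin (EKL P π πstar (n+1)) (iterAvg P π D (n+1)) (α * γ) t a,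
        ← EKLS (n+1) t a, ← iterS D (n+1) t a]
  -- unrolled identity
  have hunroll : ∀ n (t : S) (a : A), D t a
      = α * ∑ k ∈ Finset.range (n+1), γ^(k+1) * EKL P π πstar k t a
        + γ^(n+1) * iterAvg P π D n t a := by
    intro n
    induction n with
    | zero =>
      intro t a
      rw [hDsplit t a]
      simp [Finset.sum_range_one]; ring
    | succ n ih =>
      intro t a
      rw [ih t a, hRrec n t a]
      conv_rhs => rw [Finset.sum_range_succ]
      ring
  -- bounds
  set M : ℝ := ∑ t, ∑ a, |D t a| with hM
  have hMD : ∀ t a, |D t a| ≤ M := by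
    intro t a
    calc |D t a| ≤ ∑ a', |D t a'| :=
          Finset.single_le_sum (f := fun a' => |D t a'|)
            (fun _ _ => abs_nonneg _) (Finset.mem_univ a)
      _ ≤ M := by
          rw [hM]
          exact Finset.single_le_sum (f := fun t' => ∑ a', |D t' a'|)
            (fun _ _ => Finset.sum_nonneg fun _ _ => abs_nonneg _) (Finset.mem_univ t)
  have havg : ∀ (f : S → A → ℝ) (K : ℝ), (∀ t a, |f t a| ≤ K) →
      ∀ t a, |∑ s', P t a s' * ∑ a', π s' a' * f s' a'| ≤ K := by
    intro f K hf t a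
    exact wavg_abs_le _ _ K (hP.1 t a) (hP.2 t a) fun s' =>
      wavg_abs_le _ _ K (hπ.1 s') (hπ.2 s') (hf s')
  have hRbd : ∀ n (t : S) (a : A), |iterAvg P π D n t a| ≤ M := by
    intro n
    induction n with
    | zero => intro t a; rw [iter0 D t a]; exact havg D M hMD t a
    | succ n ih => intro t a; rw [iterS D n t a]; exact havg _ M ih t a
  set K : ℝ := ∑ t, |KLdiv (π t) (πstar t)| with hK
  have hKbd : ∀ t : S, |KLdiv (π t) (πstar t)| ≤ K := fun t => by
    rw [hK]
    exact Finset.single_le_sum (f := fun t' => |KLdiv (π t') (πstar t')|)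
      (fun _ _ => abs_nonneg _) (Finset.mem_univ t)
  have hEKLbd : ∀ n (t : S) (a : A), |EKL P π πstar n t a| ≤ K := by
    intro n
    induction n with
    | zero =>
      intro t a
      rw [EKL0 t a]
      exact wavg_abs_le (P t a) _ K (hP.1 t a) (hP.2 t a) fun s' => hKbd s'
    | succ n ih => intro t a; rw [EKLS n t a]; exact havg _ K ih t a
  -- D equals α times the sequential KL
  have hDseq : ∀ (t : S) (a : A), D t a = α * seqKL P π πstar γ t a := by
    intro t a
    have hsum : Summable (fun n => γ^(n+1) * EKL P π πstar n t a) := by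
      apply Summable.of_norm_bounded
        ((summable_geometric_of_lt_one hγ0 hγ1).mul_left (K * γ))
      intro n
      have h1 : ‖γ^(n+1) * EKL P π πstar n t a‖ = γ^(n+1) * |EKL P π πstar n t a| := by
        rw [norm_mul, Real.norm_eq_abs, Real.norm_eq_abs, abs_of_nonneg (pow_nonneg hγ0 _)]
      rw [h1]
      calc γ^(n+1) * |EKL P π πstar n t a| ≤ γ^(n+1) * K :=
            mul_le_mul_of_nonneg_left (hEKLbd n t a) (pow_nonneg hγ0 _)
        _ = (K * γ) * γ^n := by ring
    have h1 : Filter.Tendsto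
        (fun n => ∑ k ∈ Finset.range n, γ^(k+1) * EKL P π πstar k t a)
        Filter.atTop (nhds (seqKL P π πstar γ t a)) :=
      hsum.hasSum.tendsto_sum_nat
    have h2 : Filter.Tendsto
        (fun n => ∑ k ∈ Finset.range (n+1), γ^(k+1) * EKL P π πstar k t a)
        Filter.atTop (nhds (seqKL P π πstar γ t a)) :=
      h1.comp (Filter.tendsto_add_atTop_nat 1)
    have h3 : (fun n => ∑ k ∈ Finset.range (n+1), γ^(k+1) * EKL P π πstar k t a)
        = fun n => (D t a - γ^(n+1) * iterAvg P π D n t a) / α := by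
      funext n
      have h := hunroll n t a
      field_simp
      linarith
    have h4 : Filter.Tendsto (fun n => γ^(n+1) * iterAvg P π D n t a)
        Filter.atTop (nhds 0) := by
      refine squeeze_zero_norm (a := fun n => M * γ^(n+1)) (fun n => ?_) ?_
      · have : ‖γ^(n+1) * iterAvg P π D n t a‖
            = γ^(n+1) * |iterAvg P π D n t a| := by
          rw [norm_mul, Real.norm_eq_abs, Real.norm_eq_abs, abs_of_nonneg (pow_nonneg hγ0 _)]
        rw [this]
        calc γ^(n+1) * |iterAvg P π D n t a| ≤ γ^(n+1) * M :=
              mul_le_mul_of_nonneg_left (hRbd n t a) (pow_nonneg hγ0 _)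
          _ = M * γ^(n+1) := by ring
      · have hg : Filter.Tendsto (fun n : ℕ => γ^n) Filter.atTop (nhds 0) :=
          tendsto_pow_atTop_nhds_zero_of_lt_one hγ0 hγ1
        have := (hg.comp (Filter.tendsto_add_atTop_nat 1)).const_mul M
        simpa using this
    have h5 : Filter.Tendsto (fun n => (D t a - γ^(n+1) * iterAvg P π D n t a) / α)
        Filter.atTop (nhds ((D t a - 0) / α)) :=
      (tendsto_const_nhds.sub h4).div_const α
    have h6 : seqKL P π πstar γ t a = (D t a - 0) / α :=
      tendsto_nhds_unique (h3 ▸ h2) h5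
    rw [h6]
    field_simp; ring
  -- conclude
  show G s = _
  rw [hGrec s]
  have hfin : ∑ a, π s a * D s a = α * ∑ a, π s a * seqKL P π πstar γ s a := by
    rw [Finset.mul_sum]
    exact Finset.sum_congr rfl fun a _ => by rw [hDseq s a]; ring
  rw [hfin]; ring
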